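/- Let A be an additive category and X = X_1 ⊕ ... ⊕ X_n with each End(X_i) local. Then every nonzero direct summand M of X is isomorphic to a direct sum of a subfamily of the X_i; in particular the decomposition of X into indecomposables is unique up to isomorphism and permutation. -/

import Mathlib

open CategoryTheory CategoryTheory.Limits

universe v u

attribute [local instance] CategoryTheory.Limits.hasBinaryBiproducts_of_finite_biproducts

/-- An object of an additive category is indecomposable if it is nonzero and whenever it
is isomorphic to a biproduct of two objects, one of them is zero. -/
def IndecObj {C : Type u} [Category.{v} C] [Preadditive C] [HasFiniteBiproducts C]
    (X : C) : Prop :=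
  ¬ IsZero X ∧ ∀ (A B : C), (X ≅ A ⊞ B) → (IsZero A ∨ IsZero B)

namespace KSAux

lemma ring_isUnit_and_of_mul_eq_one {R : Type*} [Ring R] [IsLocalRing R] {a b : R}
    (h : a * b = 1) : IsUnit a ∧ IsUnit b := by
  have hba : b * a = 1 := by
    rcases IsLocalRing.isUnit_or_isUnit_of_add_one (a := b * a) (b := 1 - b * a) (by abel)
      with hu | hu
    · have he : (b * a) * (b * a) = (b * a) * 1 := by
        rw [mul_one, mul_assoc, ← mul_assoc a b, h, one_mul]
      exact hu.mul_left_cancel he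
    · have he : (1 - b * a) * (1 - b * a) = (1 - b * a) * 1 := by
        rw [mul_one]
        have : (b * a) * (b * a) = b * a := by rw [mul_assoc, ← mul_assoc a b, h, one_mul]
        rw [sub_mul, mul_sub, mul_sub, this]; noncomm_ring
      have h0 : b * a = 0 := by
        have h2 := hu.mul_left_cancel he
        exact sub_eq_self.mp h2
      have hb : b = 0 := by
        calc b = (b * a) * b := by rw [mul_assoc, h, mul_one]
        _ = 0 := by rw [h0, zero_mul]
      exact absurd (by rw [hb, mul_zero] at h; exact h.symm) (one_ne_zero)
  exact ⟨⟨⟨a, b, h, hba⟩, rfl⟩, ⟨⟨b, a, hba, h⟩, rfl⟩⟩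

lemma ring_isUnit_and_of_isUnit_mul {R : Type*} [Ring R] [IsLocalRing R] {a b : R}
    (h : IsUnit (a * b)) : IsUnit a ∧ IsUnit b := by
  obtain ⟨u, hu⟩ := h
  have h1 : a * (b * ↑u⁻¹) = 1 := by rw [← mul_assoc, ← hu, Units.mul_inv]
  obtain ⟨ha, hc⟩ := ring_isUnit_and_of_mul_eq_one h1
  refine ⟨ha, ?_⟩
  have : b = (b * ↑u⁻¹) * ↑u := by rw [mul_assoc, Units.inv_mul, mul_one]
  rw [this]; exact hc.mul u.isUnit

variable {C : Type u} [Category.{v} C] [Preadditive C]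

lemma isIso_or_isIso_of_add {A : C} [IsLocalRing (End A)] (f g : A ⟶ A)
    (h : f + g = 𝟙 A) : IsIso f ∨ IsIso g := by
  rcases IsLocalRing.isUnit_or_isUnit_of_add_one (R := End A) (a := f) (b := g) h
    with hu | hu
  · exact Or.inl ((isUnit_iff_isIso (X := A) f).1 hu)
  · exact Or.inr ((isUnit_iff_isIso (X := A) g).1 hu)

lemma isIso_and_of_comp_isIso {A : C} [IsLocalRing (End A)] {f g : End A}
    (h : IsIso (f ≫ g)) : IsIso f ∧ IsIso g := by
  have hu : IsUnit ((g : End A) * (f : End A)) := by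
    show IsUnit (M := End A) _
    rw [End.mul_def]; exact (isUnit_iff_isIso (X := A) (f ≫ g)).2 h
  obtain ⟨hg, hf⟩ := ring_isUnit_and_of_isUnit_mul (R := End A) hu
  exact ⟨(isUnit_iff_isIso (X := A) f).1 hf, (isUnit_iff_isIso (X := A) g).1 hg⟩

lemma isZero_of_retract {M X : C} [HasZeroMorphisms C] (hX : IsZero X)
    (u : M ⟶ X) (r : X ⟶ M) (h : u ≫ r = 𝟙 M) : IsZero M := by
  rw [IsZero.iff_id_eq_zero]
  rw [← h, hX.eq_of_tgt u 0, zero_comp]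


section Biprod
variable [HasFiniteBiproducts C]
attribute [local instance] CategoryTheory.Limits.hasBinaryBiproducts_of_finite_biproducts

lemma isZero_biproduct_empty {n : ℕ} (hn : n = 0) (f : Fin n → C) : IsZero (⨁ f) := by
  subst hn
  rw [IsZero.iff_id_eq_zero]
  apply biproduct.hom_ext
  exact fun j => j.elim0

/-- `⨁ f ≅ f 0 ⊞ ⨁ (f ∘ Fin.succ)`. -/
noncomputable def consIso {n : ℕ} (f : Fin (n + 1) → C) :
    (⨁ f) ≅ f 0 ⊞ ⨁ (fun j : Fin n => f j.succ) where
  hom := biprod.lift (biproduct.π f 0) (biproduct.lift fun j => biproduct.π f j.succ)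
  inv := biprod.desc (biproduct.ι f 0) (biproduct.desc fun j => biproduct.ι f j.succ)
  hom_inv_id := by
    rw [biprod.lift_desc, biproduct.lift_desc, ← biproduct.total, Fin.sum_univ_succ]
  inv_hom_id := by
    apply biprod.hom_ext'
    · apply biprod.hom_ext
      · simp
      · apply biproduct.hom_ext
        intro j
        simp [biproduct.ι_π, (Fin.succ_ne_zero j).symm]
    · apply biprod.hom_ext
      · apply biproduct.hom_ext'
        intro j
        simp [biproduct.ι_π, Fin.succ_ne_zero, (Fin.succ_ne_zero j).symm]
      · apply biproduct.hom_ext'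
        intro j
        apply biproduct.hom_ext
        intro k
        simp [biproduct.ι_π, Fin.succ_injective, Fin.succ_inj]

lemma split_retract [IsIdempotentComplete C] {M X : C} (u : M ⟶ X) (r : X ⟶ M)
    (hur : u ≫ r = 𝟙 M) : ∃ N : C, Nonempty (X ≅ M ⊞ N) := by
  obtain ⟨N, i, q, hiq, hqi⟩ := IsIdempotentComplete.idempotents_split X (𝟙 X - r ≫ u)
    (by simp [Preadditive.sub_comp, Preadditive.comp_sub, reassoc_of% hur])
  refine ⟨N, ⟨⟨biprod.lift r q, biprod.desc u i, ?_, ?_⟩⟩⟩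
  · rw [biprod.lift_desc, hqi]; abel
  · apply biprod.hom_ext'
    · apply biprod.hom_ext
      · simp [hur]
      · have : u ≫ q = 0 := by
          have h1 : u ≫ q ≫ i = 0 := by
            rw [hqi, Preadditive.comp_sub, Category.comp_id, reassoc_of% hur]; abel
          calc u ≫ q = u ≫ q ≫ (i ≫ q) := by rw [hiq, Category.comp_id]
          _ = (u ≫ q ≫ i) ≫ q := by simp only [Category.assoc]
          _ = 0 := by rw [h1, zero_comp]
        simp [this]
    · apply biprod.hom_ext
      · have : i ≫ r = 0 := by
          have h1 : (q ≫ i) ≫ r = 0 := by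
            rw [hqi, Preadditive.sub_comp, Category.id_comp, Category.assoc, hur,
              Category.comp_id]; abel
          calc i ≫ r = (i ≫ q) ≫ i ≫ r := by rw [hiq, Category.id_comp]
          _ = i ≫ (q ≫ i) ≫ r := by simp only [Category.assoc]
          _ = 0 := by rw [h1]; simp
        simp [this]
      · simp [hiq]


lemma cancel_of_diag {A B B' : C} (φ : A ⊞ B ≅ A ⊞ B')
    (h1 : biprod.inr ≫ φ.hom ≫ biprod.fst = 0)
    (h2 : biprod.inl ≫ φ.hom ≫ biprod.snd = 0) : Nonempty (B ≅ B') := by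
  refine ⟨⟨biprod.inr ≫ φ.hom ≫ biprod.snd, biprod.inr ≫ φ.inv ≫ biprod.snd, ?_, ?_⟩⟩
  · have : (biprod.snd ≫ biprod.inr : A ⊞ B' ⟶ A ⊞ B') = 𝟙 _ - biprod.fst ≫ biprod.inl := by
      rw [← biprod.total]; abel
    calc (biprod.inr ≫ φ.hom ≫ biprod.snd) ≫ biprod.inr ≫ φ.inv ≫ biprod.snd
        = biprod.inr ≫ φ.hom ≫ (biprod.snd ≫ biprod.inr) ≫ φ.inv ≫ biprod.snd := by
          simp only [Category.assoc]
      _ = biprod.inr ≫ φ.hom ≫ (𝟙 _ - biprod.fst ≫ biprod.inl) ≫ φ.inv ≫ biprod.snd := by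
          rw [this]
      _ = (biprod.inr : B ⟶ A ⊞ B) ≫ biprod.snd
          - (biprod.inr ≫ φ.hom ≫ biprod.fst) ≫ biprod.inl ≫ φ.inv ≫ biprod.snd := by
          simp [Preadditive.sub_comp, Preadditive.comp_sub]
      _ = 𝟙 B := by rw [h1]; simp
  · have : (biprod.snd ≫ biprod.inr : A ⊞ B ⟶ A ⊞ B) = 𝟙 _ - biprod.fst ≫ biprod.inl := by
      rw [← biprod.total]; abel
    calc (biprod.inr ≫ φ.inv ≫ biprod.snd) ≫ biprod.inr ≫ φ.hom ≫ biprod.snd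
        = biprod.inr ≫ φ.inv ≫ (𝟙 _ - biprod.fst ≫ biprod.inl) ≫ φ.hom ≫ biprod.snd := by
          rw [← this]; simp only [Category.assoc]
      _ = (biprod.inr : B' ⟶ A ⊞ B') ≫ biprod.snd
          - (biprod.inr ≫ φ.inv ≫ biprod.fst) ≫ biprod.inl ≫ φ.hom ≫ biprod.snd := by
          simp [Preadditive.sub_comp, Preadditive.comp_sub]
      _ = 𝟙 B' := by rw [h2]; simp

lemma cancel_of_corner {A B B' : C} (φ : A ⊞ B ≅ A ⊞ B')
    (hα : IsIso (biprod.inl ≫ φ.hom ≫ biprod.fst)) : Nonempty (B ≅ B') := by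
  set α := biprod.inl ≫ φ.hom ≫ biprod.fst with hαdef
  set γ := biprod.inr ≫ φ.hom ≫ biprod.fst with hγdef
  set β := biprod.inl ≫ φ.hom ≫ biprod.snd with hβdef
  -- elementary automorphism of A ⊞ B
  set x : A ⊞ B ⟶ A ⊞ B := biprod.snd ≫ (γ ≫ inv α) ≫ biprod.inl with hxdef
  have hxx : x ≫ x = 0 := by
    simp only [hxdef, Category.assoc, biprod.inl_snd_assoc, zero_comp, comp_zero]
  have w1 : IsIso (𝟙 (A ⊞ B) - x) := by
    refine ⟨𝟙 (A ⊞ B) + x, ?_, ?_⟩ <;>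
      simp [Preadditive.sub_comp, Preadditive.comp_add, Preadditive.add_comp,
        Preadditive.comp_sub, hxx]
  set y : A ⊞ B' ⟶ A ⊞ B' := biprod.fst ≫ (inv α ≫ β) ≫ biprod.inr with hydef
  have hyy : y ≫ y = 0 := by
    simp only [hydef, Category.assoc, biprod.inr_fst_assoc, zero_comp, comp_zero]
  have w2 : IsIso (𝟙 (A ⊞ B') - y) := by
    refine ⟨𝟙 (A ⊞ B') + y, ?_, ?_⟩ <;>
      simp [Preadditive.sub_comp, Preadditive.comp_add, Preadditive.add_comp,
        Preadditive.comp_sub, hyy]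
  set ψ : A ⊞ B ≅ A ⊞ B' :=
    asIso (𝟙 (A ⊞ B) - x) ≪≫ φ ≪≫ asIso (𝟙 (A ⊞ B') - y) with hψdef
  have hψhom : ψ.hom = (𝟙 (A ⊞ B) - x) ≫ φ.hom ≫ (𝟙 (A ⊞ B') - y) := by
    simp [hψdef]
  have hw2fst : (𝟙 (A ⊞ B') - y) ≫ biprod.fst = biprod.fst := by
    simp only [Preadditive.sub_comp, Category.id_comp, hydef, Category.assoc,
      biprod.inr_fst, comp_zero, sub_zero]
  have hw1inl : biprod.inl ≫ (𝟙 (A ⊞ B) - x) = biprod.inl := by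
    simp only [Preadditive.comp_sub, Category.comp_id, hxdef, biprod.inl_snd_assoc,
      zero_comp, sub_zero]
  apply cancel_of_diag ψ
  · rw [hψhom]; simp only [Category.assoc]
    calc biprod.inr ≫ (𝟙 (A ⊞ B) - x) ≫ φ.hom ≫ (𝟙 (A ⊞ B') - y) ≫ biprod.fst
        = (biprod.inr ≫ (𝟙 (A ⊞ B) - x)) ≫ φ.hom ≫ biprod.fst := by
          rw [hw2fst]; simp only [Category.assoc]
      _ = (biprod.inr - γ ≫ inv α ≫ biprod.inl) ≫ φ.hom ≫ biprod.fst := by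
          congr 1
          simp only [Preadditive.comp_sub, Category.comp_id, hxdef,
            biprod.inr_snd_assoc, Category.assoc]
      _ = γ - γ ≫ inv α ≫ α := by
          simp only [Preadditive.sub_comp, Category.assoc, hγdef, hαdef]
      _ = 0 := by simp [hαdef]
  · rw [hψhom]; simp only [Category.assoc]
    calc biprod.inl ≫ (𝟙 (A ⊞ B) - x) ≫ φ.hom ≫ (𝟙 (A ⊞ B') - y) ≫ biprod.snd
        = biprod.inl ≫ φ.hom ≫ (𝟙 (A ⊞ B') - y) ≫ biprod.snd := by
          rw [← Category.assoc, hw1inl]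
      _ = β - (biprod.inl ≫ φ.hom ≫ biprod.fst) ≫ inv α ≫ β ≫
            (biprod.inr : B' ⟶ A ⊞ B') ≫ biprod.snd := by
          simp only [Preadditive.comp_sub, Preadditive.sub_comp, Category.comp_id,
            Category.id_comp, hydef, Category.assoc, hβdef]
      _ = β - α ≫ inv α ≫ β := by
          rw [← hαdef]; simp only [biprod.inr_snd, Category.comp_id]
      _ = 0 := by simp [hαdef]


lemma biprod_cancel {A B B' : C} [IsLocalRing (End A)] (φ : A ⊞ B ≅ A ⊞ B') :
    Nonempty (B ≅ B') := by
  set α : A ⟶ A := biprod.inl ≫ φ.hom ≫ biprod.fst with hαdef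
  set a' : A ⟶ A := biprod.inl ≫ φ.inv ≫ biprod.fst with ha'def
  set b : A ⟶ B' := biprod.inl ≫ φ.hom ≫ biprod.snd with hbdef
  set c : B' ⟶ A := biprod.inr ≫ φ.inv ≫ biprod.fst with hcdef
  have key : α ≫ a' + b ≫ c = 𝟙 A := by
    have h0 : biprod.inl ≫ φ.hom ≫ (biprod.fst ≫ biprod.inl + biprod.snd ≫ biprod.inr) ≫
        φ.inv ≫ biprod.fst = 𝟙 A := by
      rw [biprod.total]; simp
    rw [hαdef, ha'def, hbdef, hcdef]
    simp only [Preadditive.comp_add, Preadditive.add_comp, Category.assoc] at h0 ⊢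
    exact h0
  rcases isIso_or_isIso_of_add _ _ key with h | h
  · exact cancel_of_corner φ (isIso_and_of_comp_isIso (f := α) (g := a') h).1
  · set t : B' ⟶ A := c ≫ inv (b ≫ c) ≫ (𝟙 A - α) with htdef
    set y : A ⊞ B' ⟶ A ⊞ B' := biprod.snd ≫ t ≫ biprod.inl with hydef
    have hyy : y ≫ y = 0 := by
      simp only [hydef, Category.assoc, biprod.inl_snd_assoc, zero_comp, comp_zero]
    have w : IsIso (𝟙 (A ⊞ B') + y) := by
      refine ⟨𝟙 (A ⊞ B') - y, ?_, ?_⟩ <;>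
        simp [Preadditive.sub_comp, Preadditive.comp_add, Preadditive.add_comp,
          Preadditive.comp_sub, hyy]
    set ψ : A ⊞ B ≅ A ⊞ B' := φ ≪≫ asIso (𝟙 (A ⊞ B') + y) with hψdef
    apply cancel_of_corner ψ
    have hbt : b ≫ t = 𝟙 A - α := by
      rw [show b ≫ t = (b ≫ c) ≫ inv (b ≫ c) ≫ (𝟙 A - α) by
        rw [htdef]; simp only [Category.assoc]]
      rw [IsIso.hom_inv_id_assoc]
    have hcorner : biprod.inl ≫ ψ.hom ≫ biprod.fst = 𝟙 A := by
      have hψ : ψ.hom = φ.hom ≫ (𝟙 (A ⊞ B') + y) := by simp [hψdef]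
      rw [hψ]
      calc biprod.inl ≫ (φ.hom ≫ (𝟙 (A ⊞ B') + y)) ≫ biprod.fst
          = α + biprod.inl ≫ φ.hom ≫ biprod.snd ≫ t ≫ biprod.inl ≫ biprod.fst := by
            rw [hαdef]
            simp only [Preadditive.comp_add, Preadditive.add_comp, Category.assoc,
              Category.comp_id, Category.id_comp, hydef]
            rfl
        _ = α + b ≫ t := by
            rw [hbdef]; simp only [biprod.inl_fst, Category.comp_id, Category.assoc]
        _ = 𝟙 A := by rw [hbt]; abel
    rw [hcorner]
    infer_instance


lemma isLocalRing_of_ringEquiv {R S : Type*} [Ring R] [Ring S] [IsLocalRing R]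
    (e : R ≃+* S) : IsLocalRing S := by
  haveI : Nontrivial S := e.symm.toEquiv.nontrivial
  refine ⟨fun {a b} h => ?_⟩
  rcases IsLocalRing.isUnit_or_isUnit_of_add_one (a := e.symm a) (b := e.symm b)
    (by rw [← map_add, h, map_one]) with h' | h'
  · exact Or.inl (by simpa using h'.map e.toRingHom)
  · exact Or.inr (by simpa using h'.map e.toRingHom)

/-- Ring equivalence of endomorphism rings along an isomorphism. -/
def endRingEquivOfIso {A B : C} (e : A ≅ B) : End A ≃+* End B where
  toFun f := e.inv ≫ f ≫ e.hom
  invFun g := e.hom ≫ g ≫ e.inv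
  left_inv f := by simp [End.mul_def]
  right_inv g := by simp [End.mul_def]
  map_mul' f g := by simp [End.mul_def]
  map_add' f g := by
    show e.inv ≫ (f + g) ≫ e.hom = e.inv ≫ f ≫ e.hom + e.inv ≫ g ≫ e.hom
    rw [Preadditive.add_comp, Preadditive.comp_add]

lemma isLocalRing_end_of_iso {A B : C} (e : A ≅ B) [IsLocalRing (End A)] :
    IsLocalRing (End B) :=
  isLocalRing_of_ringEquiv (endRingEquivOfIso e)

lemma corner_decomp {A R M N : C} (Φ : A ⊞ R ≅ M ⊞ N) :
    (biprod.inl ≫ Φ.hom ≫ biprod.fst) ≫ (biprod.inl ≫ Φ.inv ≫ biprod.fst)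
      + (biprod.inl ≫ Φ.hom ≫ biprod.snd) ≫ (biprod.inr ≫ Φ.inv ≫ biprod.fst) = 𝟙 A := by
  have h0 : biprod.inl ≫ Φ.hom ≫ (biprod.fst ≫ biprod.inl + biprod.snd ≫ biprod.inr) ≫
      Φ.inv ≫ biprod.fst = 𝟙 A := by
    rw [biprod.total]; simp
  simp only [Preadditive.comp_add, Preadditive.add_comp, Category.assoc] at h0 ⊢
  exact h0

/-- `X ⊞ Z ≅ X` when `Z` is zero. -/
noncomputable def biprodIsoOfIsZeroRight {X Z : C} (hZ : IsZero Z) : X ⊞ Z ≅ X where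
  hom := biprod.fst
  inv := biprod.inl
  hom_inv_id := by
    apply biprod.hom_ext'
    · simp
    · simp [hZ.eq_of_src (biprod.inr ≫ biprod.fst ≫ biprod.inl) biprod.inr]
  inv_hom_id := by simp

/-- `⨁ f ≅ f 0` for a single-object family. -/
noncomputable def singleIso (f : Fin 1 → C) : (⨁ f) ≅ f 0 :=
  consIso f ≪≫ biprodIsoOfIsZeroRight (isZero_biproduct_empty rfl _)

/-- congruence iso for biproducts. -/
noncomputable def biprodCongr {J : Type} [Finite J] {f g : J → C} (h : ∀ j, f j = g j) :
    (⨁ f) ≅ ⨁ g :=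
  eqToIso (by rw [funext h])

lemma azumaya [IsIdempotentComplete C] :
    ∀ (n : ℕ) (Xi : Fin n → C), (∀ i, IsLocalRing (End (Xi i))) →
    ∀ (M : C), ¬ IsZero M → ∀ (u : M ⟶ ⨁ Xi) (r : ⨁ Xi ⟶ M), u ≫ r = 𝟙 M →
    ∃ (m : ℕ) (g : Fin m ↪ Fin n), Nonempty (M ≅ ⨁ fun j => Xi (g j)) := by
  intro n
  induction n with
  | zero =>
    intro Xi _ M hM u r hur
    exact absurd (isZero_of_retract (isZero_biproduct_empty rfl Xi) u r hur) hM
  | succ n ih =>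
    intro Xi hloc M hM u r hur
    haveI := hloc 0
    obtain ⟨N, ⟨hMN⟩⟩ := split_retract u r hur
    set Φ : Xi 0 ⊞ (⨁ fun j : Fin n => Xi j.succ) ≅ M ⊞ N :=
      (consIso Xi).symm ≪≫ hMN with hΦdef
    rcases isIso_or_isIso_of_add _ _ (corner_decomp Φ) with h | h
    · -- `Xi 0` is a summand of `M`
      set f : Xi 0 ⟶ M := biprod.inl ≫ Φ.hom ≫ biprod.fst with hfdef
      set g : M ⟶ Xi 0 := biprod.inl ≫ Φ.inv ≫ biprod.fst with hgdef
      have hfg : f ≫ g ≫ inv (f ≫ g) = 𝟙 (Xi 0) := by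
        rw [← Category.assoc]; exact IsIso.hom_inv_id _
      obtain ⟨M', ⟨hM'⟩⟩ := split_retract f (g ≫ inv (f ≫ g)) hfg
      have hcan : Nonempty ((⨁ fun j : Fin n => Xi j.succ) ≅ M' ⊞ N) := by
        refine biprod_cancel (A := Xi 0) ?_
        exact Φ ≪≫ (biprod.mapIso hM' (Iso.refl N)) ≪≫ biprod.associator _ _ _
      obtain ⟨c⟩ := hcan
      by_cases hM'zero : IsZero M'
      · refine ⟨1, ⟨fun _ => 0, fun _ _ _ => Subsingleton.elim _ _⟩, ⟨?_⟩⟩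
        exact hM' ≪≫ biprodIsoOfIsZeroRight hM'zero ≪≫
          (singleIso fun _ : Fin 1 => Xi 0).symm
      · have hret : (biprod.inl ≫ c.inv) ≫ (c.hom ≫ biprod.fst) = 𝟙 M' := by
          simp
        obtain ⟨m₀, g₀, ⟨hiso⟩⟩ := ih (fun j => Xi j.succ) (fun j => hloc j.succ) M' hM'zero
          (biprod.inl ≫ c.inv) (c.hom ≫ biprod.fst) hret
        refine ⟨m₀ + 1, ⟨Fin.cases 0 (fun j => (g₀ j).succ), ?_⟩, ⟨?_⟩⟩
        · intro a b hab
          induction a using Fin.cases <;> induction b using Fin.cases <;>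
            simp_all [Fin.succ_ne_zero, (Fin.succ_ne_zero _).symm, Fin.succ_inj]
        · refine hM' ≪≫ biprod.mapIso (Iso.refl _) hiso ≪≫ ?_ ≪≫ (consIso _).symm
          refine biprod.mapIso (eqToIso (by rfl)) (biprodCongr fun j => ?_)
          rfl
    · -- `Xi 0` is a summand of `N`
      set f : Xi 0 ⟶ N := biprod.inl ≫ Φ.hom ≫ biprod.snd with hfdef
      set g : N ⟶ Xi 0 := biprod.inr ≫ Φ.inv ≫ biprod.fst with hgdef
      have hfg : f ≫ g ≫ inv (f ≫ g) = 𝟙 (Xi 0) := by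
        rw [← Category.assoc]; exact IsIso.hom_inv_id _
      obtain ⟨N', ⟨hN'⟩⟩ := split_retract f (g ≫ inv (f ≫ g)) hfg
      have hcan : Nonempty ((⨁ fun j : Fin n => Xi j.succ) ≅ M ⊞ N') := by
        refine biprod_cancel (A := Xi 0) ?_
        exact Φ ≪≫ biprod.mapIso (Iso.refl M) hN' ≪≫ (biprod.associator _ _ _).symm ≪≫
          biprod.mapIso (biprod.braiding _ _) (Iso.refl N') ≪≫ biprod.associator _ _ _
      obtain ⟨c⟩ := hcan
      have hret : (biprod.inl ≫ c.inv) ≫ (c.hom ≫ biprod.fst) = 𝟙 M := by simp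
      obtain ⟨m₀, g₀, ⟨hiso⟩⟩ := ih (fun j => Xi j.succ) (fun j => hloc j.succ) M hM
        (biprod.inl ≫ c.inv) (c.hom ≫ biprod.fst) hret
      refine ⟨m₀, g₀.trans ⟨Fin.succ, Fin.succ_injective n⟩, ⟨?_⟩⟩
      exact hiso ≪≫ biprodCongr fun j => rfl


lemma nonzero_of_local {A : C} (h : IsLocalRing (End A)) : ¬ IsZero A := by
  intro hz
  have h1 : (1 : End A) = 0 := by
    have := (IsZero.iff_id_eq_zero A).1 hz
    simpa [End.one_def] using this
  exact one_ne_zero h1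

lemma indec_of_local {A P Q : C} [IsLocalRing (End A)] (h : A ≅ P ⊞ Q) :
    IsZero P ∨ IsZero Q := by
  set a : A ⟶ A := h.hom ≫ (biprod.fst ≫ biprod.inl) ≫ h.inv with hadef
  set b : A ⟶ A := h.hom ≫ (biprod.snd ≫ biprod.inr) ≫ h.inv with hbdef
  have hab : a + b = 𝟙 A := by
    rw [hadef, hbdef, ← Preadditive.comp_add, ← Preadditive.add_comp, biprod.total]
    simp
  rcases isIso_or_isIso_of_add _ _ hab with hu | hu
  · refine Or.inr ?_
    rw [IsZero.iff_id_eq_zero]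
    have ht : (biprod.inr ≫ h.inv) ≫ a = 0 := by
      rw [hadef]
      simp
    have : (biprod.inr ≫ h.inv : Q ⟶ A) = 0 := by
      calc (biprod.inr ≫ h.inv : Q ⟶ A) = ((biprod.inr ≫ h.inv) ≫ a) ≫ inv a := by
            rw [Category.assoc, IsIso.hom_inv_id, Category.comp_id]
        _ = 0 := by rw [ht, zero_comp]
    calc 𝟙 Q = (biprod.inr ≫ h.inv) ≫ (h.hom ≫ biprod.snd) := by simp
      _ = 0 := by rw [this, zero_comp]
  · refine Or.inl ?_
    rw [IsZero.iff_id_eq_zero]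
    have ht : (biprod.inl ≫ h.inv) ≫ b = 0 := by
      rw [hbdef]
      simp
    have : (biprod.inl ≫ h.inv : P ⟶ A) = 0 := by
      calc (biprod.inl ≫ h.inv : P ⟶ A) = ((biprod.inl ≫ h.inv) ≫ b) ≫ inv b := by
            rw [Category.assoc, IsIso.hom_inv_id, Category.comp_id]
        _ = 0 := by rw [ht, zero_comp]
    calc 𝟙 P = (biprod.inl ≫ h.inv) ≫ (h.hom ≫ biprod.fst) := by simp
      _ = 0 := by rw [this, zero_comp]

/-- Main uniqueness lemma, for two families with local endomorphism rings. -/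
lemma uniq [IsIdempotentComplete C] :
    ∀ (n : ℕ) (Xi : Fin n → C), (∀ i, IsLocalRing (End (Xi i))) →
    ∀ (m : ℕ) (Y : Fin m → C), (∀ j, IsLocalRing (End (Y j))) →
    ((⨁ Xi) ≅ ⨁ Y) → n = m ∧ ∃ σ : Fin n ≃ Fin m, ∀ i, Nonempty (Xi i ≅ Y (σ i)) := by
  intro n
  induction n with
  | zero =>
    intro Xi _ m Y hY h
    have hz : IsZero (⨁ Y) := (isZero_biproduct_empty rfl Xi).of_iso h.symm
    cases m with
    | zero => exact ⟨rfl, Equiv.refl _, fun i => i.elim0⟩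
    | succ m' =>
      exact absurd (isZero_of_retract hz (biproduct.ι Y 0) (biproduct.π Y 0) (by simp))
        (nonzero_of_local (hY 0))
  | succ n ih =>
    intro Xi hXi m Y hY h
    haveI := hXi 0
    have hM : ¬ IsZero (Xi 0) := nonzero_of_local (hXi 0)
    have hur : (biproduct.ι Xi 0 ≫ h.hom) ≫ (h.inv ≫ biproduct.π Xi 0) = 𝟙 (Xi 0) := by simp
    cases m with
    | zero =>
      exact absurd (isZero_of_retract (isZero_biproduct_empty rfl Y) _ _ hur) hM
    | succ m' =>
      obtain ⟨k, g, ⟨hk⟩⟩ := azumaya (m' + 1) Y hY (Xi 0) hM _ _ hur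
      cases k with
      | zero => exact absurd ((isZero_biproduct_empty rfl _).of_iso hk) hM
      | succ k' =>
        have hXiY0' : Nonempty (Xi 0 ≅ Y (g 0)) := by
          have h2 := hk ≪≫ consIso (fun j : Fin (k' + 1) => Y (g j))
          rcases indec_of_local h2 with hz | hz
          · exact absurd hz (nonzero_of_local (hY (g 0)))
          · exact ⟨h2 ≪≫ biprodIsoOfIsZeroRight hz⟩
        obtain ⟨hXiY0⟩ := hXiY0'
        set j₀ : Fin (m' + 1) := g 0 with hj₀
        set Z : Fin (m' + 1) → C := fun j => Y ((Equiv.swap (0 : Fin (m' + 1)) j₀) j) with hZdef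
        have hZY : (⨁ Z) ≅ ⨁ Y :=
          biproduct.whiskerEquiv (Equiv.swap (0 : Fin (m' + 1)) j₀) (fun j => Iso.refl _)
        have hZ0 : Z 0 = Y j₀ := by
          rw [hZdef]; simp
        have φ : Xi 0 ⊞ (⨁ fun i : Fin n => Xi i.succ) ≅
            Xi 0 ⊞ (⨁ fun j : Fin m' => Z j.succ) := by
          refine (consIso Xi).symm ≪≫ h ≪≫ hZY.symm ≪≫ consIso Z ≪≫
            biprod.mapIso (eqToIso hZ0 ≪≫ hXiY0.symm) (Iso.refl _)
        obtain ⟨c⟩ := biprod_cancel φ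
        obtain ⟨hnm, σ', hσ'⟩ := ih (fun i => Xi i.succ) (fun i => hXi i.succ) m'
          (fun j => Z j.succ) (fun j => hY _) c
        refine ⟨by rw [hnm], ((finSuccEquiv n).trans ((Equiv.optionCongr σ').trans
          (finSuccEquiv m').symm)).trans (Equiv.swap (0 : Fin (m' + 1)) j₀), ?_⟩
        intro i
        induction i using Fin.cases with
        | zero =>
          refine ⟨?_⟩
          have : (((finSuccEquiv n).trans ((Equiv.optionCongr σ').trans
              (finSuccEquiv m').symm)).trans (Equiv.swap (0 : Fin (m' + 1)) j₀)) 0 = j₀ := by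
            simp
          rw [this]
          exact hXiY0
        | succ i' =>
          obtain ⟨hi⟩ := hσ' i'
          refine ⟨?_⟩
          have : (((finSuccEquiv n).trans ((Equiv.optionCongr σ').trans
              (finSuccEquiv m').symm)).trans (Equiv.swap (0 : Fin (m' + 1)) j₀)) i'.succ
              = (Equiv.swap (0 : Fin (m' + 1)) j₀) (σ' i').succ := by
            simp
          rw [this]
          exact hi

end Biprod

section Transfer
open CategoryTheory.Idempotents
attribute [local instance] CategoryTheory.Limits.hasBinaryBiproducts_of_finite_biproducts
variable [HasFiniteBiproducts C]

/-- Ring equivalence of endomorphism rings along a fully faithful additive functor. -/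
noncomputable def endRingEquivOfFF {D : Type*} [Category D] [Preadditive D] (F : C ⥤ D)
    [F.Full] [F.Faithful] [F.Additive] (X : C) : End X ≃+* End (F.obj X) where
  toFun f := F.map f
  invFun g := F.preimage g
  left_inv f := F.preimage_map f
  right_inv g := F.map_preimage g
  map_mul' f g := by
    show F.map (g ≫ f) = F.map g ≫ F.map f
    rw [F.map_comp]
  map_add' f g := F.map_add

lemma isZero_of_map_isZero {D : Type*} [Category D] [Preadditive D] (F : C ⥤ D)
    [F.Faithful] [F.Additive] {M : C} (h : IsZero (F.obj M)) : IsZero M := by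
  rw [IsZero.iff_id_eq_zero] at h ⊢
  apply F.map_injective
  rw [F.map_id, F.map_zero, h]

lemma azumayaC (n : ℕ) (Xi : Fin n → C) (hloc : ∀ i, IsLocalRing (End (Xi i)))
    (M : C) (hM : ¬ IsZero M) (u : M ⟶ ⨁ Xi) (r : ⨁ Xi ⟶ M) (hur : u ≫ r = 𝟙 M) :
    ∃ (m : ℕ) (g : Fin m ↪ Fin n), Nonempty (M ≅ ⨁ fun j => Xi (g j)) := by
  set F := toKaroubi C with hFdef
  have hlocK : ∀ i, IsLocalRing (End ((F.obj ∘ Xi) i)) := fun i => by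
    haveI := hloc i
    exact isLocalRing_of_ringEquiv (endRingEquivOfFF F (Xi i))
  have hMK : ¬ IsZero (F.obj M) := fun hz => hM (isZero_of_map_isZero F hz)
  have hcomp : (F.map u ≫ (F.mapBiproduct Xi).hom) ≫ ((F.mapBiproduct Xi).inv ≫ F.map r)
      = 𝟙 (F.obj M) := by
    rw [Category.assoc, Iso.hom_inv_id_assoc, ← F.map_comp, hur, F.map_id]
  obtain ⟨m, g, ⟨hiso⟩⟩ := azumaya n (F.obj ∘ Xi) hlocK (F.obj M) hMK _ _ hcomp
  refine ⟨m, g, ⟨F.preimageIso (hiso ≪≫ (biprodCongr fun j => rfl) ≪≫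
    (F.mapBiproduct fun j => Xi (g j)).symm)⟩⟩

end Transfer
end KSAux


/-- Proposition 1.2, uniqueness: if `X = X₁ ⊕ ⋯ ⊕ Xₙ` with each
`End Xᵢ` local, then every nonzero direct summand `M` of `X` is isomorphic to the direct
sum of a subfamily of the `Xᵢ`; in particular the decomposition of `X` into
indecomposables is unique up to isomorphism and permutation. -/
theorem summand_of_local_decomposition {C : Type u} [Category.{v} C] [Preadditive C]
    [HasFiniteBiproducts C] (X : C) (n : ℕ) (Xi : Fin n → C) (e : X ≅ ⨁ Xi)
    (hloc : ∀ i, IsLocalRing (End (Xi i)))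
    (M : C) (hM : ¬ IsZero M) (u : M ⟶ X) (r : X ⟶ M) (hur : u ≫ r = 𝟙 M) :
    (∃ (m : ℕ) (g : Fin m ↪ Fin n), Nonempty (M ≅ ⨁ fun j => Xi (g j))) ∧
    ∀ (m : ℕ) (Y : Fin m → C), (∀ j, IndecObj (Y j)) → (X ≅ ⨁ Y) →
      n = m ∧ ∃ σ : Fin n ≃ Fin m, ∀ i, Nonempty (Xi i ≅ Y (σ i)) := by
  open KSAux CategoryTheory.Idempotents in
  constructor
  · exact KSAux.azumayaC n Xi hloc M hM (u ≫ e.hom) (e.inv ≫ r)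
      (by rw [Category.assoc, Iso.hom_inv_id_assoc, hur])
  · intro m Y hindec hXY
    have hτ : ∀ j, ∃ i : Fin n, Nonempty (Y j ≅ Xi i) := by
      intro j
      have hnz : ¬ IsZero (Y j) := (hindec j).1
      have hur_j : (biproduct.ι Y j ≫ hXY.inv ≫ e.hom) ≫
          (e.inv ≫ hXY.hom ≫ biproduct.π Y j) = 𝟙 (Y j) := by simp
      obtain ⟨k, gk, ⟨hk⟩⟩ := KSAux.azumayaC n Xi hloc (Y j) hnz _ _ hur_j
      cases k with
      | zero => exact absurd ((KSAux.isZero_biproduct_empty rfl _).of_iso hk) hnz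
      | succ k' =>
        have h2 := hk ≪≫ KSAux.consIso _
        rcases (hindec j).2 _ _ h2 with hz | hz
        · exact absurd hz (KSAux.nonzero_of_local (hloc (gk 0)))
        · exact ⟨gk 0, ⟨h2 ≪≫ KSAux.biprodIsoOfIsZeroRight hz⟩⟩
    have hlocY : ∀ j, IsLocalRing (End (Y j)) := fun j => by
      obtain ⟨i, ⟨hij⟩⟩ := hτ j
      haveI := hloc i
      exact KSAux.isLocalRing_end_of_iso hij.symm
    set F := toKaroubi C with hFdef
    have hlocKX : ∀ i, IsLocalRing (End ((F.obj ∘ Xi) i)) := fun i => by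
      haveI := hloc i
      exact KSAux.isLocalRing_of_ringEquiv (KSAux.endRingEquivOfFF F (Xi i))
    have hlocKY : ∀ j, IsLocalRing (End ((F.obj ∘ Y) j)) := fun j => by
      haveI := hlocY j
      exact KSAux.isLocalRing_of_ringEquiv (KSAux.endRingEquivOfFF F (Y j))
    have hiso : (⨁ (F.obj ∘ Xi)) ≅ ⨁ (F.obj ∘ Y) :=
      (F.mapBiproduct Xi).symm ≪≫ F.mapIso (e.symm ≪≫ hXY) ≪≫ F.mapBiproduct Y
    obtain ⟨hnm, σ, hσ⟩ := KSAux.uniq n (F.obj ∘ Xi) hlocKX m (F.obj ∘ Y) hlocKY hiso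
    exact ⟨hnm, σ, fun i => ⟨F.preimageIso (hσ i).some⟩⟩
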